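/- arXiv:1701.07620 — 2 statements merged into one kernel-verified Lean document; each statement's English description precedes it below -/
import Mathlib

section
/- For every integer n ≥ 0 and every real polynomial p of degree at most 2n+1, the Gauss–Chebyshev quadrature rule is exact: (π/(n+1)) · Σ_{j=0}^{n} p(cos((2j+1)π/(2(n+1)))) = ∫_{−1}^{1} p(x) · (1−x²)^{−1/2} dx. -/
open Real Finset

section GaussChebyshevAux
open Polynomial Polynomial.Chebyshev MeasureTheory intervalIntegral


lemma cos_image_Ioo : Real.cos '' Set.Ioo 0 π = Set.Ioo (-1 : ℝ) 1 := by
  apply Set.Subset.antisymm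
  · rintro _ ⟨θ, hθ, rfl⟩
    constructor
    · have := Real.strictAntiOn_cos ⟨le_of_lt hθ.1, le_of_lt hθ.2⟩ ⟨le_of_lt (hθ.1.trans hθ.2), le_refl π⟩ hθ.2
      simpa [Real.cos_pi] using this
    · have := Real.strictAntiOn_cos ⟨le_refl (0:ℝ), le_of_lt (hθ.1.trans hθ.2)⟩ ⟨le_of_lt hθ.1, le_of_lt hθ.2⟩ hθ.1
      simpa [Real.cos_zero] using this
  · rintro y ⟨h1, h2⟩
    refine ⟨Real.arccos y, ⟨?_, ?_⟩, Real.cos_arccos (le_of_lt h1) (le_of_lt h2)⟩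
    · exact Real.arccos_pos.2 h2
    · exact lt_of_le_of_ne (Real.arccos_le_pi y) (fun h => by have := Real.arccos_eq_pi.1 h; linarith)

lemma integral_weight_eq (p : Polynomial ℝ) :
    (∫ x in (-1 : ℝ)..1, p.eval x / Real.sqrt (1 - x ^ 2)) =
      ∫ θ in (0:ℝ)..π, p.eval (Real.cos θ) := by
  have h1 : (∫ x in (-1 : ℝ)..1, p.eval x / Real.sqrt (1 - x ^ 2)) =
      ∫ x in Set.Ioo (-1:ℝ) 1, p.eval x / Real.sqrt (1 - x ^ 2) := by
    rw [intervalIntegral.integral_of_le (by norm_num), MeasureTheory.integral_Ioc_eq_integral_Ioo]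
  have h2 : (∫ θ in (0:ℝ)..π, p.eval (Real.cos θ)) =
      ∫ θ in Set.Ioo (0:ℝ) π, p.eval (Real.cos θ) := by
    rw [intervalIntegral.integral_of_le Real.pi_pos.le, MeasureTheory.integral_Ioc_eq_integral_Ioo]
  rw [h1, h2, ← cos_image_Ioo]
  rw [MeasureTheory.integral_image_eq_integral_abs_deriv_smul measurableSet_Ioo
      (fun x _ => (Real.hasDerivAt_cos x).hasDerivWithinAt)
      (Real.injOn_cos.mono (Set.Ioo_subset_Icc_self)) _]
  apply MeasureTheory.setIntegral_congr_fun measurableSet_Ioo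
  intro θ hθ
  have hs : 0 < Real.sin θ := Real.sin_pos_of_pos_of_lt_pi hθ.1 hθ.2
  have hsq : Real.sqrt (1 - Real.cos θ ^ 2) = Real.sin θ := by
    rw [show (1 : ℝ) - Real.cos θ ^ 2 = Real.sin θ ^ 2 by
      have := Real.sin_sq_add_cos_sq θ; linarith]
    exact Real.sqrt_sq hs.le
  simp only [hsq, abs_neg, abs_of_pos hs, smul_eq_mul]
  field_simp

lemma integral_cos_nat (k : ℕ) (hk : k ≠ 0) :
    (∫ θ in (0:ℝ)..π, Real.cos ((k:ℝ) * θ)) = 0 := by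
  rw [intervalIntegral.integral_comp_mul_left (fun x => Real.cos x)
    (by exact_mod_cast hk : (k:ℝ) ≠ 0)]
  simp [integral_cos, Real.sin_nat_mul_pi]

lemma node_sum_eq_zero (n k : ℕ) (hk1 : 1 ≤ k) (hk2 : k ≤ 2 * n + 1) :
    ∑ j ∈ range (n + 1),
      Real.cos ((k:ℝ) * ((2 * (j:ℝ) + 1) * π / (2 * ((n:ℝ) + 1)))) = 0 := by
  set α : ℝ := π / (2 * ((n:ℝ) + 1)) with hα
  have hn1 : (0:ℝ) < (n:ℝ) + 1 := by positivity
  have hαval : ∀ j : ℕ, (k:ℝ) * ((2 * (j:ℝ) + 1) * π / (2 * ((n:ℝ) + 1)))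
      = (2 * (j:ℝ) + 1) * ((k:ℝ) * α) := by
    intro j; rw [hα]; field_simp
  have hsin : Real.sin ((k:ℝ) * α) ≠ 0 := by
    apply ne_of_gt
    apply Real.sin_pos_of_pos_of_lt_pi
    · rw [hα]; positivity
    · rw [hα]
      have hkr : (k:ℝ) ≤ 2 * (n:ℝ) + 1 := by exact_mod_cast hk2
      rw [mul_div_assoc', div_lt_iff₀ (by positivity)]
      nlinarith [Real.pi_pos]
  have key : (∑ j ∈ range (n + 1),
      Real.cos ((k:ℝ) * ((2 * (j:ℝ) + 1) * π / (2 * ((n:ℝ) + 1))))) *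
      (2 * Real.sin ((k:ℝ) * α)) = 0 := by
    rw [Finset.sum_mul]
    have step : ∀ j ∈ range (n+1),
        Real.cos ((k:ℝ) * ((2 * (j:ℝ) + 1) * π / (2 * ((n:ℝ) + 1)))) *
          (2 * Real.sin ((k:ℝ) * α)) =
        Real.sin ((2 * ((j:ℝ)+1)) * ((k:ℝ)*α)) - Real.sin ((2 * (j:ℝ)) * ((k:ℝ)*α)) := by
      intro j _
      rw [hαval j]
      have e1 : (2 * ((j:ℝ)+1)) * ((k:ℝ)*α) = (2*(j:ℝ)+1) * ((k:ℝ)*α) + (k:ℝ)*α := by ring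
      have e2 : (2 * (j:ℝ)) * ((k:ℝ)*α) = (2*(j:ℝ)+1) * ((k:ℝ)*α) - (k:ℝ)*α := by ring
      rw [e1, e2, Real.sin_add, Real.sin_sub]; ring
    rw [Finset.sum_congr rfl step]
    have tel := Finset.sum_range_sub (fun j : ℕ => Real.sin ((2 * (j:ℝ)) * ((k:ℝ)*α))) (n+1)
    push_cast at tel
    rw [tel]
    have : (2 * ((n:ℝ)+1)) * ((k:ℝ)*α) = (k:ℝ) * π := by rw [hα]; field_simp
    rw [this]
    simp [Real.sin_nat_mul_pi]
  have h2s : (2 * Real.sin ((k:ℝ) * α)) ≠ 0 := by positivity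
  exact (mul_eq_zero.1 key).resolve_right h2s

lemma X_pow_mem_span (m : ℕ) :
    (X : ℝ[X]) ^ m ∈ Submodule.span ℝ ((fun k : ℕ => T ℝ (k:ℤ)) '' Set.Iic m) := by
  induction m with
  | zero =>
    apply Submodule.subset_span
    exact ⟨0, Set.mem_Iic.2 le_rfl, by simp [T_zero]⟩
  | succ m ih =>
    have hX : ∀ k : ℕ, k ≤ m → (X : ℝ[X]) * T ℝ (k:ℤ) ∈
        Submodule.span ℝ ((fun k : ℕ => T ℝ (k:ℤ)) '' Set.Iic (m+1)) := by
      intro k hk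
      have hmul := Polynomial.Chebyshev.T_mul_T (R := ℝ) 1 (k:ℤ)
      rw [T_one] at hmul
      have : (X : ℝ[X]) * T ℝ (k:ℤ) = (1/2 : ℝ) • T ℝ (1 + k) + (1/2 : ℝ) • T ℝ (1 - k) := by
        have h2 : (2:ℝ[X]) * X * T ℝ (k:ℤ) = T ℝ (1+k) + T ℝ (1-k) := by
          exact hmul
        have h3 : (2:ℝ[X]) * X * T ℝ (k:ℤ) = (2:ℝ) • (X * T ℝ (k:ℤ)) := by
          rw [smul_eq_C_mul, show ((Polynomial.C (2:ℝ)) = (2:ℝ[X])) from map_ofNat Polynomial.C 2]; ring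
        rw [h3] at h2
        have := congrArg (fun q => (1/2 : ℝ) • q) h2
        simp only [smul_add, smul_smul] at this
        norm_num at this
        rw [← this]
      rw [this]
      apply Submodule.add_mem
      · apply Submodule.smul_mem
        apply Submodule.subset_span
        refine ⟨k+1, Set.mem_Iic.2 (by omega), ?_⟩
        push_cast; ring_nf
      · apply Submodule.smul_mem
        apply Submodule.subset_span
        have : T ℝ (1 - (k:ℤ)) = T ℝ ((1 - (k:ℤ)).natAbs) := (T_natAbs ℝ _).symm
        rw [this]
        refine ⟨(1 - (k:ℤ)).natAbs, Set.mem_Iic.2 (by omega), rfl⟩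
    rw [pow_succ, mul_comm]
    refine Submodule.span_induction ?_ ?_ ?_ ?_ ih
    · rintro x ⟨k, hk, rfl⟩
      exact hX k hk
    · simp
    · intro a b _ _ ha hb
      rw [mul_add]; exact Submodule.add_mem _ ha hb
    · intro c a _ ha
      rw [mul_smul_comm]; exact Submodule.smul_mem _ c ha

lemma chebyshev_node_exact (n : ℕ) (k : ℕ) (hk : k ≤ 2 * n + 1) :
    (π / ((n:ℝ) + 1)) *
        ∑ j ∈ range (n + 1),
          (T ℝ (k:ℤ)).eval (Real.cos ((2 * (j : ℝ) + 1) * π / (2 * ((n : ℝ) + 1)))) =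
      ∫ θ in (0:ℝ)..π, (T ℝ (k:ℤ)).eval (Real.cos θ) := by
  have heval : ∀ θ : ℝ, (T ℝ (k:ℤ)).eval (Real.cos θ) = Real.cos ((k:ℝ) * θ) := by
    intro θ
    have := Polynomial.Chebyshev.T_real_cos θ (k:ℤ)
    push_cast at this
    exact this
  have hint : (∫ θ in (0:ℝ)..π, (T ℝ (k:ℤ)).eval (Real.cos θ))
      = ∫ θ in (0:ℝ)..π, Real.cos ((k:ℝ) * θ) := by
    congr 1; ext θ; exact heval θ
  simp only [heval]
  rcases Nat.eq_zero_or_pos k with hk0 | hk1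
  · subst hk0
    simp only [Nat.cast_zero, zero_mul, Real.cos_zero]
    rw [Finset.sum_const, Finset.card_range]
    simp only [nsmul_eq_mul, mul_one, integral_one]
    have hn1 : ((n:ℝ) + 1) ≠ 0 := by positivity
    field_simp
    push_cast; ring
  · rw [integral_cos_nat k (by omega)]
    rw [node_sum_eq_zero n k hk1 hk]
    ring

lemma quad_exact_of_mem_span (n : ℕ) (p : ℝ[X])
    (hp : p ∈ Submodule.span ℝ ((fun k : ℕ => T ℝ (k:ℤ)) '' Set.Iic (2 * n + 1))) :
    (π / ((n:ℝ) + 1)) *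
        ∑ j ∈ range (n + 1),
          p.eval (Real.cos ((2 * (j : ℝ) + 1) * π / (2 * ((n : ℝ) + 1)))) =
      ∫ θ in (0:ℝ)..π, p.eval (Real.cos θ) := by
  have hInt : ∀ q : ℝ[X], IntervalIntegrable (fun θ => q.eval (Real.cos θ))
      MeasureTheory.volume 0 π := fun q =>
    ((q.continuous_aeval.comp Real.continuous_cos).intervalIntegrable 0 π)
  refine Submodule.span_induction ?_ ?_ ?_ ?_ hp
  · rintro x ⟨k, hk, rfl⟩
    exact chebyshev_node_exact n k hk
  · simp
  · intro a b _ _ ha hb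
    simp only [Polynomial.eval_add]
    rw [Finset.sum_add_distrib, mul_add, ha, hb,
      intervalIntegral.integral_add (hInt a) (hInt b)]
  · intro c a _ ha
    simp only [Polynomial.eval_smul, smul_eq_mul]
    rw [← Finset.mul_sum, ← mul_assoc, mul_comm (π / ((n:ℝ)+1)) c, mul_assoc, ha,
      ← intervalIntegral.integral_const_mul]

end GaussChebyshevAux

/-- Gauss–Chebyshev quadrature with `n+1` nodes (the zeros of `T_{n+1}`) and
equal weights `π/(n+1)` is exact for every polynomial of degree at most
`2n+1` against the Chebyshev weight `(1−x²)^{−1/2}` on `[−1,1]`. -/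
theorem gauss_chebyshev_exact (n : ℕ) (p : Polynomial ℝ)
    (hp : p.degree ≤ (2 * n + 1 : ℕ)) :
    (π / (n + 1)) *
        ∑ j ∈ range (n + 1),
          p.eval (Real.cos ((2 * (j : ℝ) + 1) * π / (2 * ((n : ℝ) + 1)))) =
      ∫ x in (-1 : ℝ)..1, p.eval x / Real.sqrt (1 - x ^ 2) := by
  rw [integral_weight_eq p]
  apply quad_exact_of_mem_span
  have hnd : p.natDegree < 2 * n + 2 := by
    have := Polynomial.natDegree_le_iff_degree_le.2 hp
    omega
  rw [Polynomial.as_sum_range' p (2 * n + 2) hnd]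
  apply Submodule.sum_mem
  intro i hi
  rw [← Polynomial.smul_X_eq_monomial]
  apply Submodule.smul_mem
  have := X_pow_mem_span i
  refine Submodule.span_mono ?_ this
  apply Set.image_mono
  exact Set.Iic_subset_Iic.2 (by simp at hi; omega)
end

section
/- Let a ∈ (1,2] and let h : [0,∞) → [0,∞) satisfy h(s) = 1 for s ∈ [0,1] and h(s) = 0 for s ≥ a. For an integer K ≥ 1 set K̄ = max(⌈aK⌉ − 1, K), G_K(s,r) = Σ_{k=0}^{K̄} h(k/K) · T_k(s) · T_k(r) / γ_k², κ_Q = ⌈(K̄ + K − 1)/2⌉, nodes r_j = cos((2j+1)π/(2(κ_Q+1))) for j = 0,…,κ_Q, weights w_j = π/(κ_Q+1), and R_K f(r) = Σ_{j=0}^{κ_Q} w_j f(r_j) G_K(r_j, r). Then for every real polynomial p of degree at most K and every r ∈ [−1,1], R_K p(r) = p(r). -/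
noncomputable section

open Real Set Finset

/-- Normalizing constants for the Chebyshev polynomials: `γ_0² = π`, `γ_k² = π/2`
for `k ≥ 1`. -/
def gammaSq (k : ℕ) : ℝ := if k = 0 then π else π / 2

/-- `K̄ = max(⌈aK⌉ − 1, K)`. -/
def Kbar (a : ℝ) (K : ℕ) : ℕ := max ((⌈a * (K : ℝ)⌉).toNat - 1) K

/-- The filtered Chebyshev kernel
`G_K(s,r) = Σ_{k=0}^{K̄} h(k/K) T_k(s) T_k(r) / γ_k²`. -/
def filteredKernel (h : ℝ → ℝ) (a : ℝ) (K : ℕ) (s r : ℝ) : ℝ :=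
  ∑ k ∈ range (Kbar a K + 1),
    h ((k : ℝ) / (K : ℝ)) * (Polynomial.Chebyshev.T ℝ (k : ℤ)).eval s *
      (Polynomial.Chebyshev.T ℝ (k : ℤ)).eval r / gammaSq k

/-- `κ_Q = ⌈(K̄ + K − 1)/2⌉` (for `K ≥ 1` this equals `(K̄ + K)/2` in natural
division). -/
def kappaQ (a : ℝ) (K : ℕ) : ℕ := (Kbar a K + K - 1 + 1) / 2

/-- The Gauss–Chebyshev nodes `r_j = cos((2j+1)π/(2(κ_Q+1)))`,
the zeros of `T_{κ_Q+1}`. -/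
def chebNode (a : ℝ) (K : ℕ) (j : ℕ) : ℝ :=
  Real.cos ((2 * (j : ℝ) + 1) * π / (2 * ((kappaQ a K : ℝ) + 1)))

/-- The filtered hyperinterpolation operator
`R_K f (r) = Σ_{j=0}^{κ_Q} w_j f(r_j) G_K(r_j, r)` with
weights `w_j = π/(κ_Q+1)`. -/
def filteredHyper (h : ℝ → ℝ) (a : ℝ) (K : ℕ) (f : ℝ → ℝ) (r : ℝ) : ℝ :=
  ∑ j ∈ range (kappaQ a K + 1),
    (π / ((kappaQ a K : ℝ) + 1)) * f (chebNode a K j) *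
      filteredKernel h a K (chebNode a K j) r


lemma cos_sum_zero (n m : ℕ) (hm1 : 1 ≤ m) (hm2 : m ≤ 2*n+1) :
    ∑ j ∈ range (n+1), Real.cos ((m:ℝ) * ((2*(j:ℝ)+1) * π / (2*((n:ℝ)+1)))) = 0 := by
  set α : ℝ := π / (2*((n:ℝ)+1)) with hα
  have hn1 : (0:ℝ) < (n:ℝ) + 1 := by positivity
  have hαpos : 0 < α := by positivity
  have hsin : Real.sin ((m:ℝ) * α) ≠ 0 := by
    apply ne_of_gt
    apply Real.sin_pos_of_pos_of_lt_pi
    · positivity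
    · have hmlt : (m:ℝ) < 2*((n:ℝ)+1) := by exact_mod_cast (by omega : m < 2*(n+1))
      rw [hα, mul_div_assoc', div_lt_iff₀ (by positivity)]
      nlinarith [Real.pi_pos]
  have key : ∀ j : ℕ, 2 * Real.sin ((m:ℝ)*α) * Real.cos ((m:ℝ) * ((2*(j:ℝ)+1) * π / (2*((n:ℝ)+1))))
      = Real.sin ((m:ℝ) * (2*((j:ℝ)+1)) * α) - Real.sin ((m:ℝ) * (2*(j:ℝ)) * α) := by
    intro j
    rw [Real.sin_sub_sin]
    have e1 : ((m:ℝ) * (2*((j:ℝ)+1)) * α - (m:ℝ) * (2*(j:ℝ)) * α)/2 = (m:ℝ)*α := by ring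
    have e2 : ((m:ℝ) * (2*((j:ℝ)+1)) * α + (m:ℝ) * (2*(j:ℝ)) * α)/2 = (m:ℝ) * ((2*(j:ℝ)+1) * α) := by ring
    rw [e1, e2, hα]
    ring_nf
  have tele : ∑ j ∈ range (n+1), (Real.sin ((m:ℝ) * (2*((j:ℝ)+1)) * α) - Real.sin ((m:ℝ) * (2*(j:ℝ)) * α)) = 0 := by
    have h2 := Finset.sum_range_sub (f := fun j : ℕ => Real.sin ((m:ℝ) * (2*(j:ℝ)) * α)) (n+1)
    push_cast at h2 ⊢
    rw [h2]
    have e3 : (m:ℝ) * (2*((n:ℝ)+1)) * α = m * π := by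
      rw [hα]; field_simp
    rw [e3]
    simp [Real.sin_nat_mul_pi]
  have h3 : (2 * Real.sin ((m:ℝ)*α)) * ∑ j ∈ range (n+1), Real.cos ((m:ℝ) * ((2*(j:ℝ)+1) * π / (2*((n:ℝ)+1)))) = 0 := by
    rw [Finset.mul_sum]
    simp_rw [key]
    exact tele
  rcases mul_eq_zero.mp h3 with h4 | h4
  · exact absurd h4 (by simp [hsin])
  · exact h4

lemma quad_orth (n k l : ℕ) (hkl : k + l ≤ 2*n+1) :
    ∑ j ∈ range (n+1),
      Real.cos ((k:ℝ) * ((2*(j:ℝ)+1) * π / (2*((n:ℝ)+1)))) *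
        Real.cos ((l:ℝ) * ((2*(j:ℝ)+1) * π / (2*((n:ℝ)+1))))
    = if k = l then (if k = 0 then ((n:ℝ)+1) else ((n:ℝ)+1)/2) else 0 := by
  have prod : ∀ a b : ℝ, Real.cos a * Real.cos b = (Real.cos (a+b) + Real.cos (a-b))/2 := by
    intro a b; rw [Real.cos_add, Real.cos_sub]; ring
  have split : ∑ j ∈ range (n+1),
      Real.cos ((k:ℝ) * ((2*(j:ℝ)+1) * π / (2*((n:ℝ)+1)))) *
        Real.cos ((l:ℝ) * ((2*(j:ℝ)+1) * π / (2*((n:ℝ)+1))))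
      = ((∑ j ∈ range (n+1), Real.cos (((k+l:ℕ):ℝ) * ((2*(j:ℝ)+1) * π / (2*((n:ℝ)+1)))))
        + ∑ j ∈ range (n+1), Real.cos (((k:ℝ)-(l:ℝ)) * ((2*(j:ℝ)+1) * π / (2*((n:ℝ)+1)))))/2 := by
    rw [← Finset.sum_add_distrib, Finset.sum_div]
    refine Finset.sum_congr rfl fun j _ => ?_
    rw [prod]
    push_cast
    ring_nf
  rw [split]
  by_cases hkeq : k = l
  · subst hkeq
    have second : ∑ j ∈ range (n+1), Real.cos (((k:ℝ)-(k:ℝ)) * ((2*(j:ℝ)+1) * π / (2*((n:ℝ)+1)))) = (n:ℝ)+1 := by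
      simp
    rw [second]
    by_cases hk0 : k = 0
    · subst hk0; simp
    · have first : ∑ j ∈ range (n+1), Real.cos (((k+k:ℕ):ℝ) * ((2*(j:ℝ)+1) * π / (2*((n:ℝ)+1)))) = 0 :=
        cos_sum_zero n (k+k) (by omega) (by omega)
      rw [first]
      simp [hk0]
  · have first : ∑ j ∈ range (n+1), Real.cos (((k+l:ℕ):ℝ) * ((2*(j:ℝ)+1) * π / (2*((n:ℝ)+1)))) = 0 :=
      cos_sum_zero n (k+l) (by omega) (by omega)
    have second : ∑ j ∈ range (n+1), Real.cos (((k:ℝ)-(l:ℝ)) * ((2*(j:ℝ)+1) * π / (2*((n:ℝ)+1)))) = 0 := by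
      rcases lt_or_gt_of_ne (fun hh => hkeq hh : k ≠ l) with hlt | hgt
      · have : ∀ j : ℕ, ((k:ℝ)-(l:ℝ)) * ((2*(j:ℝ)+1) * π / (2*((n:ℝ)+1)))
            = -(((l-k:ℕ):ℝ) * ((2*(j:ℝ)+1) * π / (2*((n:ℝ)+1)))) := by
          intro j
          have : ((l-k:ℕ):ℝ) = (l:ℝ) - (k:ℝ) := by
            push_cast [Nat.cast_sub hlt.le]; ring
          rw [this]; ring
        simp_rw [this, Real.cos_neg]
        exact cos_sum_zero n (l-k) (by omega) (by omega)
      · have : ∀ j : ℕ, ((k:ℝ)-(l:ℝ)) * ((2*(j:ℝ)+1) * π / (2*((n:ℝ)+1)))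
            = ((k-l:ℕ):ℝ) * ((2*(j:ℝ)+1) * π / (2*((n:ℝ)+1))) := by
          intro j
          have : ((k-l:ℕ):ℝ) = (k:ℝ) - (l:ℝ) := by
            push_cast [Nat.cast_sub hgt.le]; ring
          rw [this]
        simp_rw [this]
        exact cos_sum_zero n (k-l) (by omega) (by omega)
    rw [first, second]
    simp [hkeq]

lemma T_natDegree_coeff : ∀ d : ℕ, (Polynomial.Chebyshev.T ℝ (d:ℤ)).natDegree ≤ d ∧
    (Polynomial.Chebyshev.T ℝ (d:ℤ)).coeff d = (if d = 0 then 1 else 2^(d-1)) := by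
  intro d
  induction d using Nat.strong_induction_on with
  | _ d ih =>
    match d with
    | 0 => simp [Polynomial.Chebyshev.T_zero]
    | 1 => simp [Polynomial.Chebyshev.T_one]
    | (d+2) =>
      have hcast : ((d+2:ℕ):ℤ) = (d:ℤ) + 2 := by push_cast; ring
      rw [hcast, Polynomial.Chebyshev.T_add_two]
      have h1 := ih (d+1) (by omega)
      have h0 := ih d (by omega)
      have hc1 : ((d+1:ℕ):ℤ) = (d:ℤ)+1 := by push_cast; ring
      rw [hc1] at h1
      constructor
      · apply le_trans (Polynomial.natDegree_sub_le _ _)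
        have hA : (2 * Polynomial.X * Polynomial.Chebyshev.T ℝ ((d:ℤ)+1)).natDegree ≤ d + 2 := by
          apply le_trans (Polynomial.natDegree_mul_le)
          have : (2 * Polynomial.X : Polynomial ℝ).natDegree ≤ 1 := by
            apply le_trans (Polynomial.natDegree_mul_le)
            simp
          omega
        simp only [max_le_iff]
        exact ⟨hA, by omega⟩
      · rw [Polynomial.coeff_sub]
        have hz : (Polynomial.Chebyshev.T ℝ (d:ℤ)).coeff (d+2) = 0 :=
          Polynomial.coeff_eq_zero_of_natDegree_lt (by omega)
        rw [hz, sub_zero]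
        rw [mul_assoc]
        have h2C : (2 : Polynomial ℝ) = Polynomial.C 2 := (map_ofNat Polynomial.C 2).symm
        rw [h2C, Polynomial.coeff_C_mul, Polynomial.coeff_X_mul, h1.2]
        simp
        ring

lemma cheb_rep : ∀ N : ℕ, ∀ p : Polynomial ℝ, p.natDegree ≤ N →
    ∃ c : ℕ → ℝ, p = ∑ l ∈ range (N+1), Polynomial.C (c l) * Polynomial.Chebyshev.T ℝ (l:ℤ) := by
  intro N
  induction N with
  | zero =>
    intro p hp
    refine ⟨fun _ => p.coeff 0, ?_⟩
    rw [Polynomial.eq_C_of_natDegree_le_zero hp]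
    simp [Polynomial.Chebyshev.T_zero]
  | succ N ih =>
    intro p hp
    set c0 : ℝ := p.coeff (N+1) / 2^N with hc0
    set q : Polynomial ℝ := p - Polynomial.C c0 * Polynomial.Chebyshev.T ℝ ((N+1:ℕ):ℤ) with hq
    have hT := T_natDegree_coeff (N+1)
    have hqd : q.natDegree ≤ N := by
      rw [Polynomial.natDegree_le_iff_coeff_eq_zero]
      intro m hm
      rw [hq, Polynomial.coeff_sub, Polynomial.coeff_C_mul]
      rcases eq_or_lt_of_le (Nat.succ_le_of_lt hm) with hm1 | hm1
      · rw [← hm1, hT.2]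
        simp [hc0]
      · have hz1 : p.coeff m = 0 := Polynomial.coeff_eq_zero_of_natDegree_lt (by omega)
        have hz2 : (Polynomial.Chebyshev.T ℝ ((N+1:ℕ):ℤ)).coeff m = 0 :=
          Polynomial.coeff_eq_zero_of_natDegree_lt (by omega)
        rw [hz1, hz2]
        ring
    obtain ⟨c, hc⟩ := ih q hqd
    refine ⟨fun l => if l = N+1 then c0 else c l, ?_⟩
    rw [Finset.sum_range_succ]
    have : ∑ l ∈ range (N+1), Polynomial.C (if l = N+1 then c0 else c l) * Polynomial.Chebyshev.T ℝ (l:ℤ)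
        = ∑ l ∈ range (N+1), Polynomial.C (c l) * Polynomial.Chebyshev.T ℝ (l:ℤ) := by
      refine Finset.sum_congr rfl fun l hl => ?_
      rw [if_neg (by simp at hl; omega)]
    rw [this, ← hc]
    show p = q + Polynomial.C (if N+1 = N+1 then c0 else c (N+1)) * Polynomial.Chebyshev.T ℝ ((N+1:ℕ):ℤ)
    rw [if_pos rfl, hq]
    ring

lemma hyper_T (h : ℝ → ℝ) (a : ℝ) (K : ℕ) (hK : 1 ≤ K)
    (h_one : ∀ s ∈ Icc (0:ℝ) 1, h s = 1)
    (l : ℕ) (hl : l ≤ K) (r : ℝ) :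
    filteredHyper h a K (fun s => (Polynomial.Chebyshev.T ℝ (l:ℤ)).eval s) r
      = (Polynomial.Chebyshev.T ℝ (l:ℤ)).eval r := by
  set n := kappaQ a K with hn
  have hKbar : K ≤ Kbar a K := le_max_right _ _
  have hKK : Kbar a K + K ≤ 2*n + 1 := by
    rw [hn]; unfold kappaQ; omega
  have node_eval : ∀ (m j : ℕ), (Polynomial.Chebyshev.T ℝ (m:ℤ)).eval (chebNode a K j)
      = Real.cos ((m:ℝ) * ((2*(j:ℝ)+1) * π / (2*((n:ℝ)+1)))) := by
    intro m j
    rw [chebNode, ← hn, Polynomial.Chebyshev.T_real_cos]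
    norm_num
  unfold filteredHyper filteredKernel
  rw [← hn]
  simp only [node_eval]
  simp_rw [Finset.mul_sum]
  rw [Finset.sum_comm]
  have step : ∀ k ∈ range (Kbar a K + 1),
      (∑ j ∈ range (n+1), π/((n:ℝ)+1) * Real.cos ((l:ℝ) * ((2*(j:ℝ)+1) * π / (2*((n:ℝ)+1)))) *
        (h ((k:ℝ)/(K:ℝ)) * Real.cos ((k:ℝ) * ((2*(j:ℝ)+1) * π / (2*((n:ℝ)+1)))) *
          (Polynomial.Chebyshev.T ℝ (k:ℤ)).eval r / gammaSq k))
      = if k = l then (Polynomial.Chebyshev.T ℝ (l:ℤ)).eval r else 0 := by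
    intro k hk
    have hk' : k ≤ Kbar a K := by simpa [Nat.lt_succ_iff] using hk
    have hkl2 : k + l ≤ 2*n+1 := by omega
    have rearr : ∀ j ∈ range (n+1),
        π/((n:ℝ)+1) * Real.cos ((l:ℝ) * ((2*(j:ℝ)+1) * π / (2*((n:ℝ)+1)))) *
          (h ((k:ℝ)/(K:ℝ)) * Real.cos ((k:ℝ) * ((2*(j:ℝ)+1) * π / (2*((n:ℝ)+1)))) *
            (Polynomial.Chebyshev.T ℝ (k:ℤ)).eval r / gammaSq k)
        = (π/((n:ℝ)+1) * (h ((k:ℝ)/(K:ℝ)) * (Polynomial.Chebyshev.T ℝ (k:ℤ)).eval r / gammaSq k)) *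
          (Real.cos ((k:ℝ) * ((2*(j:ℝ)+1) * π / (2*((n:ℝ)+1)))) *
            Real.cos ((l:ℝ) * ((2*(j:ℝ)+1) * π / (2*((n:ℝ)+1))))) := by
      intro j _; ring
    rw [Finset.sum_congr rfl rearr, ← Finset.mul_sum, quad_orth n k l hkl2]
    have hn1 : ((n:ℝ)+1) ≠ 0 := by positivity
    by_cases hkeq : k = l
    · subst hkeq
      rw [if_pos rfl, if_pos rfl]
      have hone : h ((k:ℝ)/(K:ℝ)) = 1 := by
        apply h_one
        constructor
        · positivity
        · rw [div_le_one (by exact_mod_cast hK)]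
          exact_mod_cast hl
      rw [hone]
      by_cases hk0 : k = 0
      · subst hk0
        simp only [if_pos rfl, gammaSq]
        field_simp
        simp only [↓reduceIte]; ring
      · rw [if_neg hk0]
        simp only [gammaSq, if_neg hk0]
        field_simp
    · rw [if_neg hkeq, if_neg hkeq, mul_zero]
  rw [Finset.sum_congr rfl step, Finset.sum_ite_eq' (range (Kbar a K + 1)) l
      (fun _ => (Polynomial.Chebyshev.T ℝ (l:ℤ)).eval r)]
  rw [if_pos (by simp [Nat.lt_succ_iff]; omega)]
lemma hyper_sum (h : ℝ → ℝ) (a : ℝ) (K : ℕ) (t : Finset ℕ) (F : ℕ → ℝ → ℝ) (r : ℝ) :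
    filteredHyper h a K (fun s => ∑ l ∈ t, F l s) r
      = ∑ l ∈ t, filteredHyper h a K (fun s => F l s) r := by
  unfold filteredHyper
  rw [Finset.sum_comm]
  refine Finset.sum_congr rfl fun j _ => ?_
  rw [← Finset.sum_mul, ← Finset.mul_sum]

lemma hyper_smul (h : ℝ → ℝ) (a : ℝ) (K : ℕ) (c : ℝ) (F : ℝ → ℝ) (r : ℝ) :
    filteredHyper h a K (fun s => c * F s) r = c * filteredHyper h a K F r := by
  unfold filteredHyper
  rw [Finset.mul_sum]
  exact Finset.sum_congr rfl fun j _ => by ring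



/-- Filtered hyperinterpolation reproduces polynomials of degree at most `K`:
for a filter `h` equal to `1` on `[0,1]` and vanishing on `[a,∞)`,
`R_K p (r) = p(r)` for every polynomial `p` of degree at most `K` and every
`r ∈ [−1,1]`. -/
theorem filteredHyper_reproduces_polynomials
    (a : ℝ) (ha : a ∈ Ioc (1 : ℝ) 2)
    (h : ℝ → ℝ)
    (h_nonneg : ∀ s : ℝ, 0 ≤ s → 0 ≤ h s)
    (h_one : ∀ s ∈ Icc (0 : ℝ) 1, h s = 1)
    (h_zero : ∀ s : ℝ, a ≤ s → h s = 0)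
    (K : ℕ) (hK : 1 ≤ K)
    (p : Polynomial ℝ) (hp : p.degree ≤ K) :
    ∀ r ∈ Icc (-1 : ℝ) 1,
      filteredHyper h a K (fun s => p.eval s) r = p.eval r := by
  intro r _
  have hnd : p.natDegree ≤ K := Polynomial.natDegree_le_iff_degree_le.mpr hp
  obtain ⟨c, hc⟩ := cheb_rep K p hnd
  have hpe : ∀ s : ℝ, p.eval s = ∑ l ∈ range (K+1), c l * (Polynomial.Chebyshev.T ℝ (l:ℤ)).eval s := by
    intro s
    rw [hc]
    rw [Polynomial.eval_finset_sum]
    exact Finset.sum_congr rfl fun l _ => by simp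
  have : (fun s : ℝ => p.eval s) = fun s => ∑ l ∈ range (K+1), c l * (Polynomial.Chebyshev.T ℝ (l:ℤ)).eval s :=
    funext hpe
  rw [this, hyper_sum]
  rw [hpe r]
  refine Finset.sum_congr rfl fun l hl => ?_
  rw [hyper_smul, hyper_T h a K hK h_one l (by simp [Nat.lt_succ_iff] at hl; omega) r]
end
end
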